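/- Let p > q ≥ 0. The action of O(p,q+1) on the set of Q'-isotropic lines in ℝ × ℝ^{p+q+1}, where g ∈ O(p,q+1) acts via the automorphism (t,y) ↦ (t, g y), has exactly two orbits: the nonempty set of Q'-isotropic lines contained in {0} × ℝ^{p+q+1}, and the nonempty set of Q'-isotropic lines not contained in {0} × ℝ^{p+q+1}. -/

import Mathlib

open Module

/-- The symmetric bilinear form `b^{p,q}` on `ℝ^{p+q}`:
`b^{p,q}(x,y) = Σ_{i<p} x_i y_i − Σ_{p≤i<p+q} x_i y_i`. -/
noncomputable def bpq (p q : ℕ) (x y : Fin (p + q) → ℝ) : ℝ :=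
  ∑ i : Fin (p + q), if (i : ℕ) < p then x i * y i else -(x i * y i)

namespace BpqAux

variable {p q : ℕ}


variable {p q : ℕ}

lemma bpq_comm (x y : Fin (p + q) → ℝ) : bpq p q x y = bpq p q y x := by
  unfold bpq; apply Finset.sum_congr rfl; intro i _; split <;> ring

lemma bpq_add_left (x x' y : Fin (p + q) → ℝ) :
    bpq p q (x + x') y = bpq p q x y + bpq p q x' y := by
  unfold bpq; rw [← Finset.sum_add_distrib]
  apply Finset.sum_congr rfl; intro i _; simp only [Pi.add_apply]; split <;> ring

lemma bpq_smul_left (a : ℝ) (x y : Fin (p + q) → ℝ) :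
    bpq p q (a • x) y = a * bpq p q x y := by
  unfold bpq; rw [Finset.mul_sum]
  apply Finset.sum_congr rfl; intro i _; simp only [Pi.smul_apply, smul_eq_mul]; split <;> ring

lemma bpq_add_right (x y y' : Fin (p + q) → ℝ) :
    bpq p q x (y + y') = bpq p q x y + bpq p q x y' := by
  rw [bpq_comm, bpq_add_left, bpq_comm y x, bpq_comm y' x]

lemma bpq_smul_right (a : ℝ) (x y : Fin (p + q) → ℝ) :
    bpq p q x (a • y) = a * bpq p q x y := by
  rw [bpq_comm, bpq_smul_left, bpq_comm y x]

lemma bpq_sub_left (x x' y : Fin (p + q) → ℝ) :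
    bpq p q (x - x') y = bpq p q x y - bpq p q x' y := by
  have : x - x' = x + (-1 : ℝ) • x' := by ring_nf; module
  rw [this, bpq_add_left, bpq_smul_left]; ring

lemma bpq_sub_right (x y y' : Fin (p + q) → ℝ) :
    bpq p q x (y - y') = bpq p q x y - bpq p q x y' := by
  rw [bpq_comm, bpq_sub_left, bpq_comm y x, bpq_comm y' x]

lemma bpq_neg_left (x y : Fin (p + q) → ℝ) : bpq p q (-x) y = - bpq p q x y := by
  have : -x = (-1 : ℝ) • x := by module
  rw [this, bpq_smul_left]; ring

lemma bpq_neg_right (x y : Fin (p + q) → ℝ) : bpq p q x (-y) = - bpq p q x y := by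
  rw [bpq_comm, bpq_neg_left, bpq_comm y x]

lemma bpq_single_left (i : Fin (p + q)) (a : ℝ) (y : Fin (p + q) → ℝ) :
    bpq p q (Pi.single i a) y = if (i : ℕ) < p then a * y i else -(a * y i) := by
  unfold bpq
  rw [Finset.sum_eq_single i]
  · simp
  · intro k _ hk
    simp [Pi.single_eq_of_ne hk]
  · simp

/-- Two vectors are connected if some isometry of `bpq` maps one to the other. -/
def Conn (p q : ℕ) (x z : Fin (p + q) → ℝ) : Prop :=
  ∃ g : (Fin (p + q) → ℝ) ≃ₗ[ℝ] (Fin (p + q) → ℝ),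
    (∀ a b, bpq p q (g a) (g b) = bpq p q a b) ∧ g x = z

lemma conn_refl (x : Fin (p + q) → ℝ) : Conn p q x x :=
  ⟨LinearEquiv.refl ℝ _, by simp, rfl⟩

lemma conn_symm {x z : Fin (p + q) → ℝ} (h : Conn p q x z) : Conn p q z x := by
  obtain ⟨g, hg, hgx⟩ := h
  refine ⟨g.symm, fun a b => ?_, by rw [← hgx]; exact g.symm_apply_apply x⟩
  conv_rhs => rw [← g.apply_symm_apply a, ← g.apply_symm_apply b, hg]

lemma conn_trans {x z w : Fin (p + q) → ℝ} (h1 : Conn p q x z) (h2 : Conn p q z w) :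
    Conn p q x w := by
  obtain ⟨g1, hg1, hx1⟩ := h1
  obtain ⟨g2, hg2, hx2⟩ := h2
  exact ⟨g1.trans g2, fun a b => by simp [LinearEquiv.trans_apply, hg2, hg1],
    by simp [LinearEquiv.trans_apply, hx1, hx2]⟩

/-- The reflection in a non-isotropic vector, as a linear equivalence. -/
noncomputable def reflMap (v : Fin (p + q) → ℝ) : (Fin (p + q) → ℝ) →ₗ[ℝ] (Fin (p + q) → ℝ) where
  toFun w := w - (2 * bpq p q w v / bpq p q v v) • v
  map_add' a b := by
    simp only [bpq_add_left]
    rw [show (2 * (bpq p q a v + bpq p q b v) / bpq p q v v) • v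
        = (2 * bpq p q a v / bpq p q v v) • v + (2 * bpq p q b v / bpq p q v v) • v by
      rw [← add_smul]; congr 1; ring]
    abel
  map_smul' c a := by
    simp only [bpq_smul_left, RingHom.id_apply, smul_sub]
    congr 1
    rw [smul_smul]
    congr 1
    ring

lemma reflMap_apply (v w : Fin (p + q) → ℝ) :
    reflMap v w = w - (2 * bpq p q w v / bpq p q v v) • v := rfl

lemma reflMap_involutive {v : Fin (p + q) → ℝ} (hv : bpq p q v v ≠ 0) :
    Function.Involutive (reflMap v) := by
  intro w
  simp only [reflMap_apply, bpq_sub_left, bpq_smul_left]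
  rw [show bpq p q w v - 2 * bpq p q w v / bpq p q v v * bpq p q v v = - bpq p q w v by
    field_simp; ring]
  rw [show (2 * -bpq p q w v / bpq p q v v) • v = -((2 * bpq p q w v / bpq p q v v) • v) by
    rw [← neg_smul]; congr 1; ring]
  abel

lemma reflMap_isom {v : Fin (p + q) → ℝ} (hv : bpq p q v v ≠ 0) (a b : Fin (p + q) → ℝ) :
    bpq p q (reflMap v a) (reflMap v b) = bpq p q a b := by
  simp only [reflMap_apply, bpq_sub_left, bpq_sub_right, bpq_smul_left, bpq_smul_right]
  have hvb : bpq p q v b = bpq p q b v := bpq_comm v b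
  field_simp [hvb]
  rw [hvb]; ring

/-- The reflection as a linear equivalence. -/
noncomputable def reflEquiv (v : Fin (p + q) → ℝ) (hv : bpq p q v v ≠ 0) :
    (Fin (p + q) → ℝ) ≃ₗ[ℝ] (Fin (p + q) → ℝ) :=
  LinearEquiv.ofInvolutive (reflMap v) (reflMap_involutive hv)

lemma conn_step {x z : Fin (p + q) → ℝ} (h : bpq p q x x = bpq p q z z)
    (hne : bpq p q (x - z) (x - z) ≠ 0) : Conn p q x z := by
  refine ⟨reflEquiv (x - z) hne, fun a b => reflMap_isom hne a b, ?_⟩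
  show reflMap (x - z) x = z
  rw [reflMap_apply]
  have hb : bpq p q x (x - z) = bpq p q x x - bpq p q x z := bpq_sub_right x x z
  have hc : bpq p q (x - z) (x - z) = 2 * (bpq p q x x - bpq p q x z) := by
    rw [bpq_sub_left, bpq_sub_right, bpq_sub_right, ← h, bpq_comm z x]; ring
  rw [hb, hc]
  rw [show 2 * (bpq p q x x - bpq p q x z) / (2 * (bpq p q x x - bpq p q x z)) = 1 by
    rw [div_self]; rw [hc] at hne; exact hne]
  simp

lemma conn_of_ne_zero {x z : Fin (p + q) → ℝ} (h : bpq p q x x = bpq p q z z)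
    (hc : bpq p q x x ≠ 0) : Conn p q x z := by
  by_cases h1 : bpq p q (x - z) (x - z) ≠ 0
  · exact conn_step h h1
  · push_neg at h1
    have h2 : bpq p q (x + z) (x + z) ≠ 0 := by
      intro h2
      apply hc
      have e1 : bpq p q (x - z) (x - z) + bpq p q (x + z) (x + z)
          = 2 * bpq p q x x + 2 * bpq p q z z := by
        simp only [bpq_sub_left, bpq_sub_right, bpq_add_left, bpq_add_right]
        rw [bpq_comm z x]; ring
      rw [h1, h2, ← h] at e1
      linarith
    have hz : bpq p q (-z) (-z) = bpq p q z z := by rw [bpq_neg_left, bpq_neg_right]; ring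
    have c1 : Conn p q x (-z) := by
      apply conn_step (by rw [hz, h])
      rwa [sub_neg_eq_add]
    have c2 : Conn p q (-z) z := by
      apply conn_step (by rw [hz])
      have : (-z) - z = (-2 : ℝ) • z := by module
      rw [this, bpq_smul_left, bpq_smul_right, ← h]
      intro hcon
      apply hc
      have : (-2 : ℝ) * (-2 * bpq p q z z) = 4 * bpq p q z z := by ring
      rw [← h] at *
      nlinarith [hcon]
    exact conn_trans c1 c2

lemma conn_isotropic_step {x z : Fin (p + q) → ℝ} (hx : bpq p q x x = 0)
    (hz : bpq p q z z = 0) (hB : bpq p q x z ≠ 0) : Conn p q x z := by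
  apply conn_step (by rw [hx, hz])
  simp only [bpq_sub_left, bpq_sub_right, hx, hz, bpq_comm z x]
  intro hcon
  apply hB
  linarith

/-! ### Specialized to signature `(p, q+1)` -/

variable (p q) in
def i0 : Fin (p + (q + 1)) := ⟨0, by omega⟩
variable (p q) in
def ip : Fin (p + (q + 1)) := ⟨p, by omega⟩
variable (p q) in
noncomputable def uvec : Fin (p + (q + 1)) → ℝ :=
  Pi.single (i0 p q) 1 + Pi.single (ip p q) 1

lemma ip_ne_i0 (hp : 0 < p) : ip p q ≠ i0 p q := by
  simp only [ip, i0, ne_eq, Fin.mk.injEq]; omega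

lemma bpq_u_right (hp : 0 < p) (y : Fin (p + (q + 1)) → ℝ) :
    bpq p (q + 1) (uvec p q) y = y (i0 p q) - y (ip p q) := by
  unfold uvec
  rw [bpq_add_left, bpq_single_left, bpq_single_left]
  have h0 : ((i0 p q : Fin (p + (q+1))) : ℕ) < p := hp
  have h1 : ¬ ((ip p q : Fin (p + (q+1))) : ℕ) < p := by simp [ip]
  simp [h0, h1]
  ring

lemma uvec_i0 (hp : 0 < p) : uvec p q (i0 p q) = 1 := by
  unfold uvec
  rw [Pi.add_apply, Pi.single_eq_same, Pi.single_eq_of_ne (Ne.symm (ip_ne_i0 hp))]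
  norm_num

lemma uvec_ip (hp : 0 < p) : uvec p q (ip p q) = 1 := by
  unfold uvec
  rw [Pi.add_apply, Pi.single_eq_same, Pi.single_eq_of_ne (ip_ne_i0 hp)]
  norm_num

lemma uvec_ne_zero (hp : 0 < p) : uvec p q ≠ 0 := by
  intro h
  have := uvec_i0 (q := q) hp
  rw [h] at this
  simp at this

lemma bpq_uvec_uvec (hp : 0 < p) : bpq p (q + 1) (uvec p q) (uvec p q) = 0 := by
  rw [bpq_u_right hp, uvec_i0 hp, uvec_ip hp]; ring

lemma exists_neg_coord (x : Fin (p + (q + 1)) → ℝ) (hx0 : bpq p (q + 1) x x = 0)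
    (hx : x ≠ 0) : ∃ j : Fin (p + (q + 1)), p ≤ (j : ℕ) ∧ x j ≠ 0 := by
  by_contra hcon
  push_neg at hcon
  have h1 : bpq p (q + 1) x x = ∑ i : Fin (p + (q + 1)),
      (if (i : ℕ) < p then x i * x i else 0) := by
    unfold bpq
    apply Finset.sum_congr rfl
    intro i _
    by_cases hi : (i : ℕ) < p
    · simp [hi]
    · simp [hi, hcon i (le_of_not_gt hi)]
  rw [hx0] at h1
  have h2 : ∀ i : Fin (p + (q + 1)), i ∈ Finset.univ →
      (0:ℝ) ≤ (if (i : ℕ) < p then x i * x i else 0) := by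
    intro i _
    split
    · exact mul_self_nonneg _
    · exact le_refl 0
  have h3 := (Finset.sum_eq_zero_iff_of_nonneg h2).mp h1.symm
  apply hx
  funext i
  by_cases hi : (i : ℕ) < p
  · have := h3 i (Finset.mem_univ i)
    rw [if_pos hi] at this
    exact mul_self_eq_zero.mp this
  · exact hcon i (le_of_not_gt hi)

lemma conn_to_u (hp : 0 < p) (x : Fin (p + (q + 1)) → ℝ)
    (hx0 : bpq p (q + 1) x x = 0) (hx : x ≠ 0) : Conn p (q + 1) x (uvec p q) := by
  have hu0 := bpq_uvec_uvec (q := q) hp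
  by_cases hBu : bpq p (q + 1) x (uvec p q) ≠ 0
  · exact conn_isotropic_step hx0 hu0 hBu
  push_neg at hBu
  have hxx : x (i0 p q) = x (ip p q) := by
    have h := bpq_u_right hp x
    rw [bpq_comm] at hBu
    rw [hBu] at h
    linarith [h]
  obtain ⟨j, hpj, hxj⟩ := exists_neg_coord x hx0 hx
  obtain ⟨s, hs1, hs2⟩ : ∃ s : ℝ, (s = 1 ∨ s = -1) ∧ x (i0 p q) - s * x j ≠ 0 := by
    by_cases h : x (i0 p q) - x j ≠ 0
    · exact ⟨1, Or.inl rfl, by rwa [one_mul]⟩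
    · push_neg at h
      refine ⟨-1, Or.inr rfl, ?_⟩
      have hxi : x (i0 p q) = x j := by linarith [sub_eq_zero.mp h]
      rw [hxi]
      intro hcon
      apply hxj
      nlinarith [hcon]
  have hj0 : j ≠ i0 p q := by
    intro h
    rw [h] at hpj
    simp [i0] at hpj
    omega
  set w : Fin (p + (q + 1)) → ℝ := Pi.single (i0 p q) 1 + Pi.single j s with hw
  have hjp : ¬ ((j : ℕ) < p) := by omega
  have hw_right : ∀ y : Fin (p + (q + 1)) → ℝ,
      bpq p (q + 1) w y = y (i0 p q) - s * y j := by
    intro y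
    rw [hw, bpq_add_left, bpq_single_left, bpq_single_left]
    have h0 : ((i0 p q : Fin (p + (q+1))) : ℕ) < p := hp
    simp [h0, hjp]
    ring
  have hwi0 : w (i0 p q) = 1 := by
    rw [hw, Pi.add_apply, Pi.single_eq_same, Pi.single_eq_of_ne (Ne.symm hj0)]
    norm_num
  have hwj : w j = s := by
    rw [hw, Pi.add_apply, Pi.single_eq_same, Pi.single_eq_of_ne hj0]
    norm_num
  have hww : bpq p (q + 1) w w = 0 := by
    rw [hw_right w, hwi0, hwj]
    rcases hs1 with h | h <;> rw [h] <;> ring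
  have hxw : bpq p (q + 1) x w ≠ 0 := by
    rw [bpq_comm, hw_right x]
    exact hs2
  have hwu : bpq p (q + 1) w (uvec p q) ≠ 0 := by
    rw [hw_right (uvec p q), uvec_i0 hp]
    by_cases hjip : j = ip p q
    · have hs : s = -1 := by
        rcases hs1 with h | h
        · exfalso
          apply hs2
          rw [h, one_mul, hjip, ← hxx]
          ring
        · exact h
      rw [hs, hjip, uvec_ip hp]
      norm_num
    · have : uvec p q j = 0 := by
        rw [uvec, Pi.add_apply, Pi.single_eq_of_ne hj0, Pi.single_eq_of_ne hjip]
        norm_num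
      rw [this]
      norm_num
  exact conn_trans (conn_isotropic_step hx0 hww hxw) (conn_isotropic_step hww hu0 hwu)

/-! ### general helpers -/

lemma mem_snd_iff {M N : Type*} [AddCommGroup M] [Module ℝ M] [AddCommGroup N] [Module ℝ N]
    (v : M × N) : v ∈ Submodule.snd ℝ M N ↔ v.1 = 0 := by
  simp [Submodule.snd]

lemma span_eq_of_mem {M : Type*} [AddCommGroup M] [Module ℝ M] [FiniteDimensional ℝ M]
    {ℓ : Submodule ℝ M} (h : finrank ℝ ℓ = 1) {v : M} (hv : v ∈ ℓ) (h0 : v ≠ 0) :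
    ℓ = Submodule.span ℝ {v} := by
  symm
  apply Submodule.eq_of_le_of_finrank_eq
  · exact (Submodule.span_singleton_le_iff_mem v ℓ).mpr hv
  · rw [finrank_span_singleton h0, h]

lemma exists_gen {M : Type*} [AddCommGroup M] [Module ℝ M] [FiniteDimensional ℝ M]
    {ℓ : Submodule ℝ M} (h : finrank ℝ ℓ = 1) :
    ∃ v : M, v ≠ 0 ∧ v ∈ ℓ ∧ ℓ = Submodule.span ℝ {v} := by
  have hb : ℓ ≠ ⊥ := by
    intro h'
    rw [h'] at h
    simp at h
  obtain ⟨v, hv, h0⟩ := Submodule.exists_mem_ne_zero_of_ne_bot hb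
  exact ⟨v, h0, hv, span_eq_of_mem h hv h0⟩

lemma rep_in_S {ℓ : Submodule ℝ (ℝ × (Fin (p + (q + 1)) → ℝ))} (h1 : finrank ℝ ℓ = 1)
    (hiso : ∀ v ∈ ℓ, v.1 ^ 2 + bpq p (q + 1) v.2 v.2 = 0)
    (hls : ℓ ≤ Submodule.snd ℝ ℝ (Fin (p + (q + 1)) → ℝ)) :
    ∃ x : Fin (p + (q + 1)) → ℝ, bpq p (q + 1) x x = 0 ∧ x ≠ 0 ∧
      ℓ = Submodule.span ℝ {((0 : ℝ), x)} := by
  obtain ⟨v, hne, hmem, hsp⟩ := exists_gen h1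
  have hv1 : v.1 = 0 := (mem_snd_iff v).mp (hls hmem)
  refine ⟨v.2, ?_, ?_, ?_⟩
  · have := hiso v hmem
    rw [hv1] at this
    simpa using this
  · intro h
    apply hne
    rw [Prod.ext_iff]
    exact ⟨hv1, h⟩
  · rw [hsp]
    congr 1
    rw [Set.singleton_eq_singleton_iff, Prod.ext_iff]
    exact ⟨hv1, rfl⟩

lemma rep_not_S {ℓ : Submodule ℝ (ℝ × (Fin (p + (q + 1)) → ℝ))} (h1 : finrank ℝ ℓ = 1)
    (hiso : ∀ v ∈ ℓ, v.1 ^ 2 + bpq p (q + 1) v.2 v.2 = 0)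
    (hns : ¬ ℓ ≤ Submodule.snd ℝ ℝ (Fin (p + (q + 1)) → ℝ)) :
    ∃ x : Fin (p + (q + 1)) → ℝ, bpq p (q + 1) x x = -1 ∧
      ℓ = Submodule.span ℝ {((1 : ℝ), x)} := by
  obtain ⟨v, hne, hmem, hsp⟩ := exists_gen h1
  have hv1 : v.1 ≠ 0 := by
    intro h
    apply hns
    intro w hw
    rw [hsp, Submodule.mem_span_singleton] at hw
    obtain ⟨c, rfl⟩ := hw
    rw [mem_snd_iff]
    simp [h]
  set v' : ℝ × (Fin (p + (q + 1)) → ℝ) := (v.1)⁻¹ • v with hv'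
  have hv'1 : v'.1 = 1 := by
    rw [hv']
    simp [inv_mul_cancel₀ hv1]
  have hv'mem : v' ∈ ℓ := Submodule.smul_mem ℓ _ hmem
  have hv'ne : v' ≠ 0 := by
    intro h
    rw [h] at hv'1
    simp at hv'1
  refine ⟨v'.2, ?_, ?_⟩
  · have := hiso v' hv'mem
    rw [hv'1] at this
    linear_combination this
  · rw [span_eq_of_mem h1 hv'mem hv'ne]
    congr 1
    rw [Set.singleton_eq_singleton_iff, Prod.ext_iff]
    exact ⟨hv'1, rfl⟩

lemma map_span_pair (g : (Fin (p + (q + 1)) → ℝ) ≃ₗ[ℝ] (Fin (p + (q + 1)) → ℝ))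
    (t : ℝ) (x : Fin (p + (q + 1)) → ℝ) :
    Submodule.map
      (LinearMap.prodMap (LinearMap.id : ℝ →ₗ[ℝ] ℝ)
        (g : (Fin (p + (q + 1)) → ℝ) →ₗ[ℝ] (Fin (p + (q + 1)) → ℝ)))
      (Submodule.span ℝ {(t, x)}) = Submodule.span ℝ {(t, g x)} := by
  have hFe : (LinearMap.prodMap (LinearMap.id : ℝ →ₗ[ℝ] ℝ)
      (g : (Fin (p + (q + 1)) → ℝ) →ₗ[ℝ] (Fin (p + (q + 1)) → ℝ))) (t, x) = (t, g x) := by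
    simp [LinearMap.prodMap_apply]
  rw [Submodule.map_span, Set.image_singleton, hFe]

end BpqAux

open BpqAux in
/-- Let `p > q ≥ 0`.  The action of `O(p,q+1)` on the set of
`Q'`-isotropic lines in `ℝ × ℝ^{p+q+1}` (where `Q'(t,x) = t² + Q^{p,q+1}(x)` and
`g ∈ O(p,q+1)` acts via `(t,y) ↦ (t, g y)`) has exactly two orbits: the nonempty set of
isotropic lines contained in `{0} × ℝ^{p+q+1}`, and the nonempty set of isotropic lines
not contained in `{0} × ℝ^{p+q+1}`.  (Two isotropic lines lie in the same orbit if and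
only if they are both contained, or both not contained, in `{0} × ℝ^{p+q+1}`.) -/
theorem isotropic_lines_two_orbits (p q : ℕ) (hpq : q < p) :
    (∃ ℓ : Submodule ℝ (ℝ × (Fin (p + (q + 1)) → ℝ)),
      (finrank ℝ ↥ℓ = 1 ∧ ∀ v ∈ ℓ, v.1 ^ 2 + bpq p (q + 1) v.2 v.2 = 0) ∧
      ℓ ≤ Submodule.snd ℝ ℝ (Fin (p + (q + 1)) → ℝ)) ∧
    (∃ ℓ : Submodule ℝ (ℝ × (Fin (p + (q + 1)) → ℝ)),
      (finrank ℝ ↥ℓ = 1 ∧ ∀ v ∈ ℓ, v.1 ^ 2 + bpq p (q + 1) v.2 v.2 = 0) ∧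
      ¬ ℓ ≤ Submodule.snd ℝ ℝ (Fin (p + (q + 1)) → ℝ)) ∧
    (∀ ℓ ℓ' : Submodule ℝ (ℝ × (Fin (p + (q + 1)) → ℝ)),
      (finrank ℝ ↥ℓ = 1 ∧ ∀ v ∈ ℓ, v.1 ^ 2 + bpq p (q + 1) v.2 v.2 = 0) →
      (finrank ℝ ↥ℓ' = 1 ∧ ∀ v ∈ ℓ', v.1 ^ 2 + bpq p (q + 1) v.2 v.2 = 0) →
      ((∃ g : (Fin (p + (q + 1)) → ℝ) ≃ₗ[ℝ] (Fin (p + (q + 1)) → ℝ),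
          (∀ x y : Fin (p + (q + 1)) → ℝ,
            bpq p (q + 1) (g x) (g y) = bpq p (q + 1) x y) ∧
          Submodule.map
            (LinearMap.prodMap (LinearMap.id : ℝ →ₗ[ℝ] ℝ)
              (g : (Fin (p + (q + 1)) → ℝ) →ₗ[ℝ] (Fin (p + (q + 1)) → ℝ))) ℓ = ℓ') ↔
        (ℓ ≤ Submodule.snd ℝ ℝ (Fin (p + (q + 1)) → ℝ) ↔
          ℓ' ≤ Submodule.snd ℝ ℝ (Fin (p + (q + 1)) → ℝ)))) := by
  have hp : 0 < p := by omega
  refine ⟨?_, ?_, ?_⟩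
  · -- line inside {0} × V
    refine ⟨Submodule.span ℝ {((0 : ℝ), uvec p q)}, ⟨?_, ?_⟩, ?_⟩
    · apply finrank_span_singleton
      intro h
      apply uvec_ne_zero (q := q) hp
      rw [Prod.ext_iff] at h
      exact h.2
    · intro v hv
      rw [Submodule.mem_span_singleton] at hv
      obtain ⟨c, rfl⟩ := hv
      simp only [Prod.smul_fst, Prod.smul_snd, smul_eq_mul, mul_zero]
      rw [bpq_smul_left, bpq_smul_right, bpq_uvec_uvec hp]
      ring
    · rw [Submodule.span_singleton_le_iff_mem, mem_snd_iff]
  · -- line not inside {0} × V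
    refine ⟨Submodule.span ℝ {((1 : ℝ), Pi.single (ip p q) 1)}, ⟨?_, ?_⟩, ?_⟩
    · apply finrank_span_singleton
      intro h
      rw [Prod.ext_iff] at h
      exact one_ne_zero h.1
    · intro v hv
      rw [Submodule.mem_span_singleton] at hv
      obtain ⟨c, rfl⟩ := hv
      have hsing : bpq p (q + 1) (Pi.single (ip p q) 1) (Pi.single (ip p q) 1) = -1 := by
        rw [bpq_single_left]
        have : ¬ ((ip p q : Fin (p + (q + 1))) : ℕ) < p := by simp [ip]
        rw [if_neg this, Pi.single_eq_same]
        norm_num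
      simp only [Prod.smul_fst, Prod.smul_snd, smul_eq_mul, mul_one]
      rw [bpq_smul_left, bpq_smul_right, hsing]
      ring
    · intro hle
      have hm : (((1 : ℝ), Pi.single (ip p q) (1:ℝ)) : ℝ × (Fin (p + (q + 1)) → ℝ)) ∈
          Submodule.span ℝ {(((1 : ℝ), Pi.single (ip p q) (1:ℝ)) : ℝ × (Fin (p + (q + 1)) → ℝ))} :=
        Submodule.mem_span_singleton_self _
      have := (mem_snd_iff _).mp (hle hm)
      simp at this
  · -- orbits
    intro ℓ ℓ' ⟨h1, hiso⟩ ⟨h1', hiso'⟩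
    constructor
    · rintro ⟨g, hg, hmap⟩
      constructor
      · intro h w hw
        rw [← hmap] at hw
        rw [Submodule.mem_map] at hw
        obtain ⟨v, hv, rfl⟩ := hw
        rw [mem_snd_iff]
        simp only [LinearMap.prodMap_apply, LinearMap.id_apply]
        exact (mem_snd_iff v).mp (h hv)
      · intro h v hv
        rw [mem_snd_iff]
        have hFv := Submodule.mem_map_of_mem (f := LinearMap.prodMap (LinearMap.id : ℝ →ₗ[ℝ] ℝ)
          (g : (Fin (p + (q + 1)) → ℝ) →ₗ[ℝ] (Fin (p + (q + 1)) → ℝ))) hv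
        rw [hmap] at hFv
        have := (mem_snd_iff _).mp (h hFv)
        simpa using this
    · intro hiff
      by_cases hls : ℓ ≤ Submodule.snd ℝ ℝ (Fin (p + (q + 1)) → ℝ)
      · have hls' := hiff.mp hls
        obtain ⟨x, hx0, hxne, hspan⟩ := rep_in_S h1 hiso hls
        obtain ⟨z, hz0, hzne, hspan'⟩ := rep_in_S h1' hiso' hls'
        obtain ⟨g, hg, hgx⟩ :=
          conn_trans (conn_to_u hp x hx0 hxne) (conn_symm (conn_to_u hp z hz0 hzne))
        refine ⟨g, hg, ?_⟩
        rw [hspan, map_span_pair, hgx, ← hspan']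
      · have hls' : ¬ ℓ' ≤ Submodule.snd ℝ ℝ (Fin (p + (q + 1)) → ℝ) :=
          fun h => hls (hiff.mpr h)
        obtain ⟨x, hx1, hspan⟩ := rep_not_S h1 hiso hls
        obtain ⟨z, hz1, hspan'⟩ := rep_not_S h1' hiso' hls'
        obtain ⟨g, hg, hgx⟩ := conn_of_ne_zero (x := x) (z := z) (hx1.trans hz1.symm) (by rw [hx1]; norm_num)
        refine ⟨g, hg, ?_⟩
        rw [hspan, map_span_pair, hgx, ← hspan']
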